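/- Let $\{G_n\}$ be a family of compact groups with $G_n \subseteq G_{n+1}$, and let $\{V_n\}$ be a consistent sequence of orthogonal $G_n$-representations generated in degree $d$. Then the sequence of dimensions $\dim V_n^{G_n}$ is nonincreasing for $n \geq d$, and hence eventually constant; consequently the projections $\mathcal{P}_{V_n} : V_{n+1}^{G_{n+1}} \to V_n^{G_n}$ are isomorphisms for all sufficiently large $n$. -/

import Mathlib

open scoped RealInnerProductSpace

noncomputable section

/-- The subspace of `G`-invariant vectors of the `G`-subrepresentation `V`. -/
def invariantsIn {Γ : Type*} [Group Γ] {H : Type*} [NormedAddCommGroup H]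
    [InnerProductSpace ℝ H] (ρ : Γ →* (H ≃ₗᵢ[ℝ] H)) (G : Subgroup Γ)
    (V : Submodule ℝ H) : Submodule ℝ H where
  carrier := {x | x ∈ V ∧ ∀ g ∈ G, ρ g x = x}
  add_mem' := by
    rintro a b ⟨ha, ha'⟩ ⟨hb, hb'⟩
    exact ⟨V.add_mem ha hb, fun g hg => by simp [map_add, ha' g hg, hb' g hg]⟩
  zero_mem' := ⟨V.zero_mem, fun g hg => by simp⟩
  smul_mem' := by
    rintro c a ⟨ha, ha'⟩
    exact ⟨V.smul_mem c ha, fun g hg => by simp [map_smul, ha' g hg]⟩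

section Aux

variable {Γ : Type*} [Group Γ] {H : Type*} [NormedAddCommGroup H]
  [InnerProductSpace ℝ H] [FiniteDimensional ℝ H] (ρ : Γ →* (H ≃ₗᵢ[ℝ] H))

lemma mem_invariantsIn {G : Subgroup Γ} {V : Submodule ℝ H} {x : H} :
    x ∈ invariantsIn ρ G V ↔ x ∈ V ∧ ∀ g ∈ G, ρ g x = x := Iff.rfl

omit [FiniteDimensional ℝ H] in
lemma rho_inv_apply (g : Γ) (x : H) : ρ g (ρ g⁻¹ x) = x := by
  have : ρ g (ρ g⁻¹ x) = (ρ g * ρ g⁻¹) x := rfl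
  rw [this, ← map_mul, mul_inv_cancel, map_one]
  rfl

omit [FiniteDimensional ℝ H] in
lemma inner_rho (g : Γ) (a w : H) : ⟪ρ g a, w⟫ = ⟪a, ρ g⁻¹ w⟫ := by
  nth_rewrite 1 [← rho_inv_apply ρ g w]
  exact (ρ g).inner_map_map a _

/-- The projection of an invariant vector onto an invariant subspace is invariant. -/
lemma proj_invariant (G : Subgroup Γ) (W : Submodule ℝ H)
    (hactn : ∀ g ∈ G, ∀ v ∈ W, ρ g v ∈ W)
    {v : H} (hv : ∀ g ∈ G, ρ g v = v) {g : Γ} (hg : g ∈ G) :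
    ρ g ((Submodule.orthogonalProjection W v : H)) = Submodule.orthogonalProjection W v := by
  set p : H := (Submodule.orthogonalProjection W v : H) with hp
  have hpW : p ∈ W := (Submodule.orthogonalProjection W v).2
  have hmem : ρ g p ∈ W := hactn g hg p hpW
  have key : (Submodule.orthogonalProjection W v : H) = ρ g p := by
    apply Submodule.eq_starProjection_of_mem_of_inner_eq_zero hmem
    intro w hw
    have h1 : v - ρ g p = ρ g (v - p) := by rw [map_sub, hv g hg]
    rw [h1, inner_rho]
    have h2 : v - p ∈ Wᗮ := Submodule.sub_starProjection_mem_orthogonal v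
    exact (Submodule.mem_orthogonal' W _).1 h2 _ (hactn g⁻¹ (G.inv_mem hg) w hw)
  rw [← key, ← hp]

/-- The orthogonal projection from invariants to invariants at a lower level. -/
def projInv (G G' : Subgroup Γ) (W W' : Submodule ℝ H) (hGG' : G ≤ G')
    (hact1 : ∀ g ∈ G, ∀ v ∈ W, ρ g v ∈ W) :
    invariantsIn ρ G' W' →ₗ[ℝ] invariantsIn ρ G W where
  toFun v := ⟨Submodule.orthogonalProjection W (v : H),
    (Submodule.orthogonalProjection W (v : H)).2,
    fun g hg => proj_invariant ρ G W hact1 (fun g' hg' => v.2.2 g' (hGG' hg')) hg⟩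
  map_add' a b := Subtype.ext (by simp)
  map_smul' c a := Subtype.ext (by simp)

lemma projInv_coe (G G' : Subgroup Γ) (W W' : Submodule ℝ H) (hGG' : G ≤ G')
    (hact1 : ∀ g ∈ G, ∀ v ∈ W, ρ g v ∈ W) (v : invariantsIn ρ G' W') :
    (projInv ρ G G' W W' hGG' hact1 v : H) = Submodule.orthogonalProjection W (v : H) := rfl

end Aux

/-- For a consistent sequence generated in degree `d`, the dimensions
of the spaces of invariants are nonincreasing for `n ≥ d`; consequently they are
eventually constant and the orthogonal projections are isomorphisms between consecutive
spaces of invariants for all sufficiently large `n` (expressed via unique existence). -/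
theorem invariant_dimensions_stabilize
    {Γ : Type*} [Group Γ] (G : ℕ → Subgroup Γ) (hG : ∀ n, G n ≤ G (n + 1))
    {H : Type*} [NormedAddCommGroup H] [InnerProductSpace ℝ H] [FiniteDimensional ℝ H]
    (ρ : Γ →* (H ≃ₗᵢ[ℝ] H))
    (V : ℕ → Submodule ℝ H) (hV : ∀ n, V n ≤ V (n + 1))
    (hact : ∀ n m, n ≤ m → ∀ g ∈ G n, ∀ v ∈ V m, ρ g v ∈ V m)
    (d : ℕ)
    (hgen : ∀ n, d ≤ n →
      V n = Submodule.span ℝ {x : H | ∃ g ∈ G n, ∃ v ∈ V d, x = ρ g v}) :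
    (∀ n, d ≤ n →
      Module.finrank ℝ (invariantsIn ρ (G (n + 1)) (V (n + 1))) ≤
        Module.finrank ℝ (invariantsIn ρ (G n) (V n))) ∧
    (∃ N, ∀ n, N ≤ n → ∀ w ∈ invariantsIn ρ (G n) (V n),
      ∃! v : H, v ∈ invariantsIn ρ (G (n + 1)) (V (n + 1)) ∧
        (Submodule.orthogonalProjection (V n) v : H) = w) := by
  have hVmono : Monotone V := monotone_nat_of_le_succ hV
  -- the projection maps
  set T : ∀ n : ℕ,
      invariantsIn ρ (G (n + 1)) (V (n + 1)) →ₗ[ℝ] invariantsIn ρ (G n) (V n) :=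
    fun n => projInv ρ (G n) (G (n + 1)) (V n) (V (n + 1)) (hG n)
      (hact n n le_rfl) with hT
  -- key kernel fact
  have hker : ∀ n, d ≤ n → ∀ v ∈ invariantsIn ρ (G (n + 1)) (V (n + 1)),
      (Submodule.orthogonalProjection (V n) v : H) = 0 → v = 0 := by
    intro n hn v hv hproj
    obtain ⟨hvV, hvinv⟩ := hv
    have hvperp : v ∈ (V n)ᗮ := by
      have := Submodule.orthogonalProjectionOnto_eq_zero_iff (K := V n) (v := v)
      exact this.1 (Subtype.ext hproj)
    have hall : ∀ u ∈ V (n + 1), ⟪u, v⟫ = 0 := by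
      intro u hu
      rw [hgen (n + 1) (le_trans hn (Nat.le_succ n))] at hu
      induction hu using Submodule.span_induction with
      | mem x hx =>
        obtain ⟨g, hg, w, hw, rfl⟩ := hx
        rw [inner_rho]
        have hinv : ρ g⁻¹ v = v := by
          have hgv : ρ g v = v := hvinv g hg
          conv_lhs => rw [← hgv]
          simpa using rho_inv_apply ρ g⁻¹ v
        rw [hinv]
        exact (Submodule.mem_orthogonal (V n) v).1 hvperp w (hVmono hn hw)
      | zero => simp
      | add x y _ _ hx hy => simp [inner_add_left, hx, hy]
      | smul c x _ hx => simp [inner_smul_left, hx]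
    have : ⟪v, v⟫ = 0 := hall v hvV
    exact inner_self_eq_zero.mp this
  have hinj : ∀ n, d ≤ n → Function.Injective (T n) := by
    intro n hn
    rw [injective_iff_map_eq_zero]
    intro v hv0
    have h0 : (Submodule.orthogonalProjection (V n) (v : H) : H) = 0 := congrArg Subtype.val hv0
    exact Subtype.ext (hker n hn v v.2 h0)
  have hle : ∀ n, d ≤ n →
      Module.finrank ℝ (invariantsIn ρ (G (n + 1)) (V (n + 1))) ≤
        Module.finrank ℝ (invariantsIn ρ (G n) (V n)) :=
    fun n hn => LinearMap.finrank_le_finrank_of_injective (hinj n hn)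
  refine ⟨hle, ?_⟩
  -- eventual constancy of the dimension sequence
  set f : ℕ → ℕ := fun k => Module.finrank ℝ (invariantsIn ρ (G (d + k)) (V (d + k)))
    with hf
  have hfanti : Antitone f := antitone_nat_of_succ_le fun k =>
    hle (d + k) (Nat.le_add_right d k)
  obtain ⟨k, hk⟩ : ∃ k, f k = sInf (Set.range f) := by
    have := Nat.sInf_mem (Set.range_nonempty f)
    obtain ⟨k, hk⟩ := this
    exact ⟨k, hk⟩
  have hconst : ∀ j, k ≤ j → f j = f k := by
    intro j hj
    refine le_antisymm (hfanti hj) ?_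
    rw [hk]
    exact Nat.sInf_le ⟨j, rfl⟩
  refine ⟨d + k, fun n hn w hw => ?_⟩
  have hdn : d ≤ n := le_trans (Nat.le_add_right d k) hn
  -- finrank equality at level n
  have hrank : Module.finrank ℝ (invariantsIn ρ (G (n + 1)) (V (n + 1))) =
      Module.finrank ℝ (invariantsIn ρ (G n) (V n)) := by
    have h1 : n = d + (n - d) := (Nat.add_sub_cancel' hdn).symm
    have h2 : n + 1 = d + (n - d + 1) := by omega
    have hk1 : k ≤ n - d := by omega
    have e1 : Module.finrank ℝ (invariantsIn ρ (G n) (V n)) = f (n - d) := by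
      rw [hf]; congr 1 <;> rw [← h1]
    have e2 : Module.finrank ℝ (invariantsIn ρ (G (n + 1)) (V (n + 1))) =
        f (n - d + 1) := by
      rw [hf]; congr 1 <;> rw [← h2]
    rw [e1, e2, hconst (n - d + 1) (by omega), hconst (n - d) hk1]
  have hsurj : Function.Surjective (T n) :=
    (LinearMap.injective_iff_surjective_of_finrank_eq_finrank hrank).1 (hinj n hdn)
  obtain ⟨v, hv⟩ := hsurj ⟨w, hw⟩
  refine ⟨(v : H), ⟨v.2, ?_⟩, ?_⟩
  · have := congrArg Subtype.val hv
    exact this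
  · rintro u ⟨hu, hup⟩
    -- uniqueness
    have hdiff : u - (v : H) ∈ invariantsIn ρ (G (n + 1)) (V (n + 1)) :=
      Submodule.sub_mem _ hu v.2
    have hvp : (Submodule.orthogonalProjection (V n) (v : H) : H) = w := by
      have := congrArg Subtype.val hv
      exact this
    have hp0 : (Submodule.orthogonalProjection (V n) (u - (v : H)) : H) = 0 := by
      rw [map_sub]
      push_cast
      rw [hup, hvp, sub_self]
    have := hker n hdn _ hdiff hp0
    have : u - (v : H) = 0 := this
    exact sub_eq_zero.mp this
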